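/- The polynomial [x_1^-, x_2^-] ∘ x_3^- (Jordan product of a commutator of skew elements with a skew element) is a *-polynomial identity of (N, σ_6) but not of (N, θ_6): for all A, B, C ∈ N skew with respect to σ_6, [A,B]C + C[A,B] = 0, while there exist A, B, C ∈ N skew with respect to θ_6 with [A,B]C + C[A,B] ≠ 0. -/

import Mathlib

open Matrix

/-- The reflection involution `θ_6` on `M_6(F)`. -/
def reflInv {F : Type*} [Field F] (A : Matrix (Fin 6) (Fin 6) F) :
    Matrix (Fin 6) (Fin 6) F :=
  Matrix.of fun i j => A j.rev i.rev

/-- The sign `δ(i)` for `σ_6`: `1` for `i ∈ {1,2,3}` and `-1` for `i ∈ {4,5,6}`. -/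
def deltaSign (F : Type*) [Field F] (i : Fin 6) : F :=
  if (i : ℕ) < 3 then 1 else -1

/-- The symplectic-type involution `σ_6` on `M_6(F)`:
`(A^{σ_6})_{ij} = δ(i)δ(j) A_{rev j, rev i}`. -/
def sigmaInv {F : Type*} [Field F] (A : Matrix (Fin 6) (Fin 6) F) :
    Matrix (Fin 6) (Fin 6) F :=
  Matrix.of fun i j => deltaSign F i * deltaSign F j * A j.rev i.rev

/-- Membership in the algebra `N ⊆ UT_6(F)`. -/
def memN {F : Type*} [Field F] (M : Matrix (Fin 6) (Fin 6) F) : Prop :=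
  (∀ i j : Fin 6, j < i → M i j = 0) ∧
  M 0 0 = M 5 5 ∧ M 1 1 = M 4 4 ∧ M 2 2 = M 3 3 ∧
  M 1 3 = 0 ∧ M 1 4 = 0 ∧ M 2 3 = 0 ∧ M 2 4 = 0

lemma mk0 (h : (0:ℕ) < 6) : (⟨0,h⟩ : Fin 6) = 0 := rfl
lemma mk1 (h : (1:ℕ) < 6) : (⟨1,h⟩ : Fin 6) = 1 := rfl
lemma mk2 (h : (2:ℕ) < 6) : (⟨2,h⟩ : Fin 6) = 2 := rfl
lemma mk3 (h : (3:ℕ) < 6) : (⟨3,h⟩ : Fin 6) = 3 := rfl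
lemma mk4 (h : (4:ℕ) < 6) : (⟨4,h⟩ : Fin 6) = 4 := rfl
lemma mk5 (h : (5:ℕ) < 6) : (⟨5,h⟩ : Fin 6) = 5 := rfl

lemma vec6_0 {α : Type*} (a b c d e f : α) : ![a,b,c,d,e,f] 0 = a := rfl
lemma vec6_1 {α : Type*} (a b c d e f : α) : ![a,b,c,d,e,f] 1 = b := rfl
lemma vec6_2 {α : Type*} (a b c d e f : α) : ![a,b,c,d,e,f] 2 = c := rfl
lemma vec6_3 {α : Type*} (a b c d e f : α) : ![a,b,c,d,e,f] 3 = d := rfl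
lemma vec6_4 {α : Type*} (a b c d e f : α) : ![a,b,c,d,e,f] 4 = e := rfl
lemma vec6_5 {α : Type*} (a b c d e f : α) : ![a,b,c,d,e,f] 5 = f := rfl

lemma c5 {α : Type*} (a : α) (u : Fin 5 → α) : Matrix.vecCons a u 5 = u 4 := rfl
lemma c4 {α : Type*} (a : α) (u : Fin 4 → α) : Matrix.vecCons a u 4 = u 3 := rfl
lemma c3 {α : Type*} (a : α) (u : Fin 3 → α) : Matrix.vecCons a u 3 = u 2 := rfl
lemma c2 {α : Type*} (a : α) (u : Fin 2 → α) : Matrix.vecCons a u 2 = u 1 := rfl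
lemma c1 {α : Type*} (a : α) (u : Fin 1 → α) : Matrix.vecCons a u 1 = u 0 := rfl

lemma rev0 : Fin.rev (0 : Fin 6) = 5 := rfl
lemma rev1 : Fin.rev (1 : Fin 6) = 4 := rfl
lemma rev2 : Fin.rev (2 : Fin 6) = 3 := rfl
lemma rev3 : Fin.rev (3 : Fin 6) = 2 := rfl
lemma rev4 : Fin.rev (4 : Fin 6) = 1 := rfl
lemma rev5 : Fin.rev (5 : Fin 6) = 0 := rfl

/-- Any `σ_6`-skew element of `N` has an explicit strictly upper triangular form. -/
lemma skew_form {F : Type*} [Field F] [CharZero F] {A : Matrix (Fin 6) (Fin 6) F}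
    (hN : memN A) (hσ : sigmaInv A = -A) :
    A = !![0, A 0 1, A 0 2, A 0 3, A 0 4, A 0 5;
           0, 0, A 1 2, 0, 0, A 0 4;
           0, 0, 0, 0, 0, A 0 3;
           0, 0, 0, 0, -(A 1 2), -(A 0 2);
           0, 0, 0, 0, 0, -(A 0 1);
           0, 0, 0, 0, 0, 0] := by
  obtain ⟨hlow, h1, h2, h3, h4, h5, h6, h7⟩ := hN
  have k00 := congrFun (congrFun hσ 0) 0
  have k11 := congrFun (congrFun hσ 1) 1
  have k22 := congrFun (congrFun hσ 2) 2
  have k25 := congrFun (congrFun hσ 2) 5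
  have k15 := congrFun (congrFun hσ 1) 5
  have k34 := congrFun (congrFun hσ 3) 4
  have k35 := congrFun (congrFun hσ 3) 5
  have k45 := congrFun (congrFun hσ 4) 5
  simp only [sigmaInv, deltaSign, Matrix.of_apply, rev0, rev1, rev2, rev3, rev4, rev5,
    show ((0:Fin 6):ℕ) = 0 from rfl, show ((1:Fin 6):ℕ) = 1 from rfl,
    show ((2:Fin 6):ℕ) = 2 from rfl, show ((3:Fin 6):ℕ) = 3 from rfl,
    show ((4:Fin 6):ℕ) = 4 from rfl, show ((5:Fin 6):ℕ) = 5 from rfl,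
    Matrix.neg_apply, if_true, if_false,
    show ((0:ℕ) < 3) = True from by simp, show ((1:ℕ) < 3) = True from by simp,
    show ((2:ℕ) < 3) = True from by simp, show ((3:ℕ) < 3) = False from by simp,
    show ((4:ℕ) < 3) = False from by simp, show ((5:ℕ) < 3) = False from by simp]
    at k00 k11 k22 k25 k15 k34 k35 k45
  have d0 : A 0 0 = 0 := by
    have h2A : (2:F) * A 0 0 = 0 := by linear_combination h1 + k00
    exact (mul_eq_zero.mp h2A).resolve_left two_ne_zero
  have d1 : A 1 1 = 0 := by
    have h2A : (2:F) * A 1 1 = 0 := by linear_combination h2 + k11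
    exact (mul_eq_zero.mp h2A).resolve_left two_ne_zero
  have d2 : A 2 2 = 0 := by
    have h2A : (2:F) * A 2 2 = 0 := by linear_combination h3 + k22
    exact (mul_eq_zero.mp h2A).resolve_left two_ne_zero
  have d3 : A 3 3 = 0 := by linear_combination d2 - h3
  have d4 : A 4 4 = 0 := by linear_combination d1 - h2
  have d5 : A 5 5 = 0 := by linear_combination d0 - h1
  ext i j
  fin_cases i <;> fin_cases j <;>
    simp only [mk0, mk1, mk2, mk3, mk4, mk5, Matrix.of_apply,
      vec6_0, vec6_1, vec6_2, vec6_3, vec6_4, vec6_5] <;>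
    first
      | rfl
      | (exact hlow _ _ (by decide))
      | assumption
      | linear_combination k25
      | linear_combination -k25
      | linear_combination k15
      | linear_combination -k15
      | linear_combination k34
      | linear_combination -k34
      | linear_combination k35
      | linear_combination -k35
      | linear_combination k45
      | linear_combination -k45

set_option maxHeartbeats 2000000 in
/-- `[x₁⁻, x₂⁻] ∘ x₃⁻` is a `*`-polynomial identity of `(N, σ_6)`
but not of `(N, θ_6)`. -/
theorem stmt_13 (F : Type*) [Field F] [CharZero F] :
    (∀ A B C : Matrix (Fin 6) (Fin 6) F, memN A → memN B → memN C →
      sigmaInv A = -A → sigmaInv B = -B → sigmaInv C = -C →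
      (A * B - B * A) * C + C * (A * B - B * A) = 0) ∧
    ∃ A B C : Matrix (Fin 6) (Fin 6) F, memN A ∧ memN B ∧ memN C ∧
      reflInv A = -A ∧ reflInv B = -B ∧ reflInv C = -C ∧
      (A * B - B * A) * C + C * (A * B - B * A) ≠ 0 := by
  constructor
  · intro A B C hA hB hC sA sB sC
    rw [skew_form hA sA, skew_form hB sB, skew_form hC sC]
    ext i j
    fin_cases i <;> fin_cases j <;>
      simp only [Matrix.mul_apply, Fin.sum_univ_six, Matrix.sub_apply, Matrix.add_apply,
        Matrix.zero_apply, Matrix.of_apply,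
        mk0, mk1, mk2, mk3, mk4, mk5, vec6_0, vec6_1, vec6_2, vec6_3, vec6_4, vec6_5] <;>
      ring
  · -- A = e12 - e56, B = e23 - e45, C = e14 - e36
    refine ⟨!![0,1,0,0,0,0; 0,0,0,0,0,0; 0,0,0,0,0,0; 0,0,0,0,0,0; 0,0,0,0,0,-1; 0,0,0,0,0,0],
            !![0,0,0,0,0,0; 0,0,1,0,0,0; 0,0,0,0,0,0; 0,0,0,0,-1,0; 0,0,0,0,0,0; 0,0,0,0,0,0],
            !![0,0,0,1,0,0; 0,0,0,0,0,0; 0,0,0,0,0,-1; 0,0,0,0,0,0; 0,0,0,0,0,0; 0,0,0,0,0,0],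
            ?_, ?_, ?_, ?_, ?_, ?_, ?_⟩
    · refine ⟨fun i j h => ?_, ⟨rfl, rfl, rfl, rfl, rfl, rfl, rfl⟩⟩
      fin_cases i <;> fin_cases j <;> first | (exfalso; exact absurd h (by decide)) | rfl
    · refine ⟨fun i j h => ?_, ⟨rfl, rfl, rfl, rfl, rfl, rfl, rfl⟩⟩
      fin_cases i <;> fin_cases j <;> first | (exfalso; exact absurd h (by decide)) | rfl
    · refine ⟨fun i j h => ?_, ⟨rfl, rfl, rfl, rfl, rfl, rfl, rfl⟩⟩
      fin_cases i <;> fin_cases j <;> first | (exfalso; exact absurd h (by decide)) | rfl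
    · ext i j
      fin_cases i <;> fin_cases j <;>
        simp only [reflInv, Matrix.of_apply, Matrix.neg_apply, mk0, mk1, mk2, mk3, mk4, mk5,
          rev0, rev1, rev2, rev3, rev4, rev5, vec6_0, vec6_1, vec6_2, vec6_3, vec6_4, vec6_5] <;>
        norm_num
    · ext i j
      fin_cases i <;> fin_cases j <;>
        simp only [reflInv, Matrix.of_apply, Matrix.neg_apply, mk0, mk1, mk2, mk3, mk4, mk5,
          rev0, rev1, rev2, rev3, rev4, rev5, vec6_0, vec6_1, vec6_2, vec6_3, vec6_4, vec6_5] <;>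
        norm_num
    · ext i j
      fin_cases i <;> fin_cases j <;>
        simp only [reflInv, Matrix.of_apply, Matrix.neg_apply, mk0, mk1, mk2, mk3, mk4, mk5,
          rev0, rev1, rev2, rev3, rev4, rev5, vec6_0, vec6_1, vec6_2, vec6_3, vec6_4, vec6_5] <;>
        norm_num
    · intro h
      have := congrFun (congrFun h 0) 5
      simp only [Matrix.mul_apply, Fin.sum_univ_six, Matrix.sub_apply, Matrix.add_apply,
        Matrix.zero_apply, Matrix.of_apply,
        vec6_0, vec6_1, vec6_2, vec6_3, vec6_4, vec6_5] at this
      norm_num at this
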